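/- There exists an election in which the set of winners under the voter replacement rule differs from the set of winners under Young's rule. Concretely: in the 4-candidate, 29-voter election with 2 voters a≻b≻c≻d, 2 voters a≻c≻d≻b, 1 voter a≻b≻d≻c, 8 voters b≻c≻a≻d, 8 voters c≻d≻a≻b, and 8 voters d≻b≻a≻c, candidate a is the unique voter-replacement winner (replacement score 3, all others ≥ 4) while candidate b has strictly smaller deletion score than a (s_d(b) = 8 but s_d(a) ≥ 12), so a is not a Young winner. -/

import Mathlib

/-- Number of voters preferring `a` to `b`. -/
noncomputable def countPref {V C : Type*} [Fintype V] (O : V → C → C → Prop) (a b : C) : ℕ :=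
  Nat.card {i : V // O i a b}

/-- `c` is a Condorcet winner: a strict majority of voters prefers `c` to every other candidate. -/
def IsCondorcetWinner {V C : Type*} [Fintype V] (O : V → C → C → Prop) (c : C) : Prop :=
  ∀ b : C, b ≠ c → Fintype.card V < 2 * countPref O c b

/-- Candidates `a=0`, `b=1`, `c=2`, `d=3`. The ballot (ranking, best first) of each of
the 29 voters: 2 voters a≻b≻c≻d, 2 voters a≻c≻d≻b, 1 voter a≻b≻d≻c, 8 voters b≻c≻a≻d,
8 voters c≻d≻a≻b, and 8 voters d≻b≻a≻c. -/
def theBallot (i : Fin 29) : List (Fin 4) :=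
  if i.val < 2 then [0, 1, 2, 3]
  else if i.val < 4 then [0, 2, 3, 1]
  else if i.val < 5 then [0, 1, 3, 2]
  else if i.val < 13 then [1, 2, 0, 3]
  else if i.val < 21 then [2, 3, 0, 1]
  else [3, 1, 0, 2]

/-- The preference profile of the 29-voter election: voter `i` prefers `x` to `y` iff
`x` occurs before `y` on voter `i`'s ballot. -/
def theProfile (i : Fin 29) (x y : Fin 4) : Prop :=
  (theBallot i).idxOf x < (theBallot i).idxOf y

/-- `c` becomes the Condorcet winner after changing the votes of at most `k` voters. -/
def ReplacementScoreLE (c : Fin 4) (k : ℕ) : Prop :=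
  ∃ O' : Fin 29 → Fin 4 → Fin 4 → Prop,
    (∀ i, IsStrictTotalOrder (Fin 4) (O' i)) ∧
    Nat.card {i : Fin 29 // O' i ≠ theProfile i} ≤ k ∧
    IsCondorcetWinner O' c

/-- `c` is the Condorcet winner after deleting the voters in `D`. -/
def WinsAfterDeleting (D : Finset (Fin 29)) (c : Fin 4) : Prop :=
  IsCondorcetWinner (fun i : {i : Fin 29 // i ∉ D} => theProfile i.1) c

/- ======== auxiliary ======== -/

instance decTheProfile (i : Fin 29) (x y : Fin 4) : Decidable (theProfile i x y) := by
  unfold theProfile; infer_instance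

lemma natCard_subtype (p : Fin 29 → Prop) [DecidablePred p] :
    Nat.card {i // p i} = (Finset.univ.filter p).card := by
  rw [Nat.card_eq_fintype_card, Fintype.card_subtype]

lemma sto_theProfile (j : Fin 29) : IsStrictTotalOrder (Fin 4) (theProfile j) := by
  have tri : ∀ (j : Fin 29) (x y : Fin 4),
      theProfile j x y ∨ x = y ∨ theProfile j y x := by decide
  haveI : IsTrichotomous (Fin 4) (theProfile j) :=
    ⟨fun x y h1 h2 => (tri j x y).elim (fun h => absurd h h1) (fun h => h.resolve_right h2)⟩
  haveI : IsIrrefl (Fin 4) (theProfile j) := ⟨fun x => Nat.lt_irrefl _⟩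
  haveI : IsTrans (Fin 4) (theProfile j) := ⟨fun x y z h1 h2 => Nat.lt_trans h1 h2⟩
  exact { }

/-- The altered profile for part 1: voters 5, 13, 21 switch to the ballot of voter 0. -/
def O1 (i : Fin 29) : Fin 4 → Fin 4 → Prop :=
  theProfile (if i = 5 ∨ i = 13 ∨ i = 21 then 0 else i)

instance decO1 (i : Fin 29) (x y : Fin 4) : Decidable (O1 i x y) := by
  unfold O1; infer_instance

lemma countPref_eq (x y : Fin 4) :
    countPref theProfile x y = (Finset.univ.filter fun i => theProfile i x y).card := by
  unfold countPref; rw [natCard_subtype]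

lemma card_remaining (D : Finset (Fin 29)) :
    Fintype.card {i : Fin 29 // i ∉ D} = 29 - D.card := by
  rw [Fintype.card_subtype]
  have : (Finset.univ.filter fun i => i ∉ D) = Finset.univ \ D := by
    ext i; simp
  rw [this, Finset.card_sdiff_of_subset (Finset.subset_univ D)]
  simp

lemma wins_iff (D : Finset (Fin 29)) (c : Fin 4) :
    WinsAfterDeleting D c ↔ ∀ y : Fin 4, y ≠ c →
      29 - D.card < 2 * ((Finset.univ.filter fun i => theProfile i c y) \ D).card := by
  unfold WinsAfterDeleting IsCondorcetWinner
  refine forall_congr' fun y => imp_congr_right fun hy => ?_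
  rw [card_remaining]
  congr! 2
  show Nat.card _ = _
  rw [Nat.card_congr (Equiv.subtypeSubtypeEquivSubtypeInter (fun i => i ∉ D)
    (fun i => theProfile i c y))]
  rw [natCard_subtype]
  congr 1
  ext i
  simp [and_comm]

lemma count_change_bound (O' : Fin 29 → Fin 4 → Fin 4 → Prop) (k : ℕ)
    (hk : Nat.card {i : Fin 29 // O' i ≠ theProfile i} ≤ k) (x y : Fin 4) :
    countPref O' x y ≤ countPref theProfile x y + k := by
  have hsub : {i : Fin 29 | O' i x y} ⊆
      {i : Fin 29 | theProfile i x y} ∪ {i : Fin 29 | O' i ≠ theProfile i} := by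
    intro i hi
    by_cases h : O' i = theProfile i
    · left; show theProfile i x y; rw [← h]; exact hi
    · right; exact h
  have e1 : countPref O' x y = ({i : Fin 29 | O' i x y} : Set (Fin 29)).ncard :=
    Nat.card_coe_set_eq _
  have e2 : countPref theProfile x y = ({i : Fin 29 | theProfile i x y} : Set (Fin 29)).ncard :=
    Nat.card_coe_set_eq _
  have e3 : Nat.card {i : Fin 29 // O' i ≠ theProfile i}
      = ({i : Fin 29 | O' i ≠ theProfile i} : Set (Fin 29)).ncard :=
    Nat.card_coe_set_eq _
  calc countPref O' x y = _ := e1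
    _ ≤ ({i : Fin 29 | theProfile i x y} ∪ {i : Fin 29 | O' i ≠ theProfile i}).ncard :=
        Set.ncard_le_ncard hsub (Set.toFinite _)
    _ ≤ ({i : Fin 29 | theProfile i x y}).ncard + ({i : Fin 29 | O' i ≠ theProfile i}).ncard :=
        Set.ncard_union_le _ _
    _ ≤ countPref theProfile x y + k := by rw [← e2]; omega

theorem stmt14 :
    ReplacementScoreLE 0 3 ∧
    (∀ x : Fin 4, x ≠ 0 → ¬ ReplacementScoreLE x 3) ∧
    (∃ D : Finset (Fin 29), D.card = 8 ∧ WinsAfterDeleting D 1) ∧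
    (∀ D : Finset (Fin 29), D.card ≤ 7 → ¬ WinsAfterDeleting D 1) ∧
    (∀ D : Finset (Fin 29), D.card ≤ 11 → ¬ WinsAfterDeleting D 0) := by
  refine ⟨⟨O1, fun i => sto_theProfile _, ?_, ?_⟩, ?_, ?_, ?_, ?_⟩
  · -- at most 3 voters changed
    have hsub : {i : Fin 29 | O1 i ≠ theProfile i} ⊆ ({5, 13, 21} : Set (Fin 29)) := by
      intro i hi
      by_contra hmem
      apply hi
      unfold O1
      rw [if_neg]
      simpa using hmem
    have hfin : ({5, 13, 21} : Set (Fin 29)) = (({5, 13, 21} : Finset (Fin 29)) : Set (Fin 29)) := by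
      simp
    calc Nat.card {i : Fin 29 // O1 i ≠ theProfile i}
        = ({i : Fin 29 | O1 i ≠ theProfile i} : Set (Fin 29)).ncard := Nat.card_coe_set_eq _
      _ ≤ ({5, 13, 21} : Set (Fin 29)).ncard := Set.ncard_le_ncard hsub (Set.toFinite _)
      _ ≤ 3 := by rw [hfin, Set.ncard_coe_finset]; decide
  · -- 0 is Condorcet winner under O1
    intro b hb
    have key : ∀ b : Fin 4, b ≠ 0 →
        Fintype.card (Fin 29) < 2 * (Finset.univ.filter fun i => O1 i 0 b).card := by decide
    have := key b hb
    unfold countPref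
    rw [natCard_subtype]
    exact this
  · -- uniqueness of replacement winner
    intro x hx
    rintro ⟨O', _, hk, hwin⟩
    have hy : ∀ x : Fin 4, x ≠ 0 → ∃ y : Fin 4, y ≠ x ∧
        2 * ((Finset.univ.filter fun i => theProfile i x y).card + 3) ≤ 29 := by decide
    obtain ⟨y, hyx, hle⟩ := hy x hx
    have h1 := hwin y hyx
    have hb := count_change_bound O' 3 hk x y
    rw [countPref_eq] at hb
    simp only [Fintype.card_fin] at h1
    omega
  · -- deleting voters 13-20 makes b win
    refine ⟨Finset.univ.filter (fun i => 13 ≤ i.val ∧ i.val < 21), by decide, ?_⟩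
    rw [wins_iff]
    decide
  · -- deletion score of b is at least 8
    intro D hD hw
    rw [wins_iff] at hw
    have h3 := hw 3 (by decide)
    have hle : ((Finset.univ.filter fun i => theProfile i 1 3) \ D).card ≤ 11 := by
      calc ((Finset.univ.filter fun i => theProfile i 1 3) \ D).card
          ≤ (Finset.univ.filter fun i => theProfile i 1 3).card :=
            Finset.card_le_card (Finset.sdiff_subset)
        _ = 11 := by decide
    omega
  · -- deletion score of a is at least 12
    intro D hD hw
    rw [wins_iff] at hw
    have h1 := hw 1 (by decide)
    have h2 := hw 2 (by decide)
    have h3 := hw 3 (by decide)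
    have e1 := Finset.card_sdiff_add_card_inter (Finset.univ.filter fun i => theProfile i 0 1) D
    have e2 := Finset.card_sdiff_add_card_inter (Finset.univ.filter fun i => theProfile i 0 2) D
    have e3 := Finset.card_sdiff_add_card_inter (Finset.univ.filter fun i => theProfile i 0 3) D
    have c1 : (Finset.univ.filter fun i => theProfile i 0 1).card = 13 := by decide
    have c2 : (Finset.univ.filter fun i => theProfile i 0 2).card = 13 := by decide
    have c3 : (Finset.univ.filter fun i => theProfile i 0 3).card = 13 := by decide
    have cover : D.card ≤ ((Finset.univ.filter fun i => theProfile i 0 1) ∩ D).card +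
        (((Finset.univ.filter fun i => theProfile i 0 2) ∩ D).card +
         ((Finset.univ.filter fun i => theProfile i 0 3) ∩ D).card) := by
      have tri : ∀ i : Fin 29, theProfile i 0 1 ∨ theProfile i 0 2 ∨ theProfile i 0 3 := by decide
      have hsub : D ⊆ ((Finset.univ.filter fun i => theProfile i 0 1) ∩ D) ∪
          (((Finset.univ.filter fun i => theProfile i 0 2) ∩ D) ∪
           ((Finset.univ.filter fun i => theProfile i 0 3) ∩ D)) := by
        intro i hi
        simp only [Finset.mem_union, Finset.mem_inter, Finset.mem_filter, Finset.mem_univ,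
          true_and]
        rcases tri i with h | h | h
        · exact Or.inl ⟨h, hi⟩
        · exact Or.inr (Or.inl ⟨h, hi⟩)
        · exact Or.inr (Or.inr ⟨h, hi⟩)
      calc D.card ≤ _ := Finset.card_le_card hsub
        _ ≤ _ := (Finset.card_union_le _ _).trans
            (Nat.add_le_add_left (Finset.card_union_le _ _) _)
    omega
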